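/- Consider the gadget graph of the EXPSPACE-hardness reduction for the edge weight −13: states s_e, p₈, p₄, p₂, p₁, s_sink (all belonging to P₀) and s', with edges s_e →(−13) s', s_e →(+3) p₈, p₈ →(−8) p₄ and p₈ →(0) p₄, p₄ →(−4) p₂ and p₄ →(0) p₂, p₂ →(−2) p₁ and p₂ →(0) p₁, p₁ →(−1) s_sink and p₁ →(0) s_sink, and s_sink →(0) s_sink. For every c ∈ ℕ, starting from s_e with current energy level c, P₀ can enter the gadget (i.e., not take the edge to s') and reach s_sink with energy level exactly zero while keeping the energy level nonnegative at every intermediate step if, and only if, c ≤ 12; in particular, if c ≥ 13 then the only way to keep the energy level nonnegative forever and achieve average-energy zero is unavailable inside the gadget, so P₀ must take the edge to s'. -/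

import Mathlib

namespace AvgEnergy

/-- An integer-weighted edge over a state space `α`. -/
abbrev WEdge (α : Type*) : Type _ := α × ℤ × α

/-- A finite turn-based weighted game `G = (S₀, S₁, E)`:
`S₀` and `S₁` are disjoint sets of states covering `S`, edges carry integer
weights bounded in absolute value by `W`, and every state has an outgoing edge. -/
structure Game (S : Type*) where
  S0 : Set S
  S1 : Set S
  E : Set (WEdge S)
  W : ℕ
  disj : Disjoint S0 S1
  cover : S0 ∪ S1 = Set.univ
  wbound : ∀ e ∈ E, -(W : ℤ) ≤ e.2.1 ∧ e.2.1 ≤ (W : ℤ)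
  total : ∀ s : S, ∃ w s', (s, w, s') ∈ E

variable {α : Type*}

/-- A play from `s`: an infinite sequence of consecutive edges of `E` starting at `s`. -/
def IsPlay (E : Set (WEdge α)) (s : α) (π : ℕ → WEdge α) : Prop :=
  (∀ i, π i ∈ E) ∧ (π 0).1 = s ∧ ∀ i, (π i).2.2 = (π (i + 1)).1

/-- Energy level of the length-`n` prefix of `π`. -/
def EL (π : ℕ → WEdge α) (n : ℕ) : ℤ :=
  ∑ i ∈ Finset.range n, (π i).2.1

/-- Mean-payoff of the length-`n` prefix of `π`. -/
def MP (π : ℕ → WEdge α) (n : ℕ) : ℚ := (EL π n : ℚ) / n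

/-- Average-energy of the length-`n` prefix of `π`. -/
def AE (π : ℕ → WEdge α) (n : ℕ) : ℚ :=
  (∑ i ∈ Finset.range n, (EL π (i + 1) : ℚ)) / n

/-- `limsup_{n → ∞} f n ≤ t` (ε-characterization, valid in `ℚ`). -/
def LimsupLE (f : ℕ → ℚ) (t : ℚ) : Prop :=
  ∀ ε : ℚ, 0 < ε → ∃ N, ∀ n ≥ N, f n ≤ t + ε

/-- The state reached after following the finite prefix `ρ` from `s`. -/
def EndSt (s : α) (ρ : List (WEdge α)) : α :=
  (ρ.getLast?.map (fun e => e.2.2)).getD s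

/-- `ρ` is a finite play prefix from `s` in the graph with edge set `E`. -/
def IsPrefixFrom (E : Set (WEdge α)) (s : α) (ρ : List (WEdge α)) : Prop :=
  (∀ e ∈ ρ, e ∈ E) ∧ List.Chain' (fun e f => e.2.2 = f.1) ρ ∧
    ∀ e, ρ.head? = some e → e.1 = s

/-- A strategy (of the player owning the states in `S0`) from `s`: it assigns to every
play prefix from `s` ending in a state of `S0` a valid outgoing edge. -/
def IsStrategy (E : Set (WEdge α)) (S0 : Set α) (s : α)
    (σ : List (WEdge α) → WEdge α) : Prop :=
  ∀ ρ, IsPrefixFrom E s ρ → EndSt s ρ ∈ S0 → σ ρ ∈ E ∧ (σ ρ).1 = EndSt s ρ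

/-- The length-`n` prefix of a play, as a list of edges. -/
def Pref (π : ℕ → WEdge α) (n : ℕ) : List (WEdge α) :=
  List.ofFn (fun i : Fin n => π i)

/-- `π` is an outcome of the strategy `σ` (for the player owning `S0`) from `s`. -/
def IsOutcome (E : Set (WEdge α)) (S0 : Set α) (s : α)
    (σ : List (WEdge α) → WEdge α) (π : ℕ → WEdge α) : Prop :=
  IsPlay E s π ∧ ∀ n, EndSt s (Pref π n) ∈ S0 → π n = σ (Pref π n)

/-- Configurations of the expanded game: `⊥` is `none`. -/
abbrev Conf (S : Type*) := Option (S × ℕ)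

/-- Edges of the expanded infinite-state weighted game `G'`:
`((s,c), c', (s',c'))` whenever `(s,w,s') ∈ E` and `c' = c + w ≥ 0`;
`((s,c), ⌈t⌉+1, ⊥)` whenever some `(s,w,s') ∈ E` has `c + w < 0`; and
`(⊥, ⌈t⌉+1, ⊥)`. -/
def ExpE {S : Type*} (G : Game S) (t : ℚ) : Set (WEdge (Conf S)) :=
  {e | (∃ (s : S) (c : ℕ) (w : ℤ) (s' : S) (c' : ℕ), (s, w, s') ∈ G.E ∧ (c : ℤ) + w = (c' : ℤ) ∧
          e = (some (s, c), (c' : ℤ), some (s', c'))) ∨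
       (∃ (s : S) (c : ℕ) (w : ℤ) (s' : S), (s, w, s') ∈ G.E ∧ (c : ℤ) + w < 0 ∧
          e = (some (s, c), ⌈t⌉ + 1, (none : Conf S))) ∨
       e = ((none : Conf S), ⌈t⌉ + 1, (none : Conf S))}

/-- The configurations of the expanded game belonging to player `P₀`. -/
def ExpS0 {S : Type*} (G : Game S) : Set (Conf S) :=
  {γ | ∃ s c, s ∈ G.S0 ∧ γ = some (s, c)}

/-- The state (configuration) visited at position `n` along a play from `s`:
`γ₀ = s` and `γ_{n+1}` is the target of the `(n+1)`-st edge. -/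
def StAt (s : α) (π : ℕ → WEdge α) : ℕ → α
  | 0 => s
  | n + 1 => (π n).2.2

end AvgEnergy

namespace AvgEnergy

/-- The states of the gadget of the EXPSPACE-hardness reduction (for weight `−13`). -/
inductive GadSt
  | se | p8 | p4 | p2 | p1 | sink | s'
deriving DecidableEq

/-- The edges of the gadget (Figure 7 of the paper):
`s_e →(−13) s'`, `s_e →(+3) p₈`, `p₈ →(−8)/(0) p₄`, `p₄ →(−4)/(0) p₂`,
`p₂ →(−2)/(0) p₁`, `p₁ →(−1)/(0) s_sink`, and `s_sink →(0) s_sink`. -/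
def GadE : Set (WEdge GadSt) :=
  {(GadSt.se, -13, GadSt.s'), (GadSt.se, 3, GadSt.p8),
   (GadSt.p8, -8, GadSt.p4), (GadSt.p8, 0, GadSt.p4),
   (GadSt.p4, -4, GadSt.p2), (GadSt.p4, 0, GadSt.p2),
   (GadSt.p2, -2, GadSt.p1), (GadSt.p2, 0, GadSt.p1),
   (GadSt.p1, -1, GadSt.sink), (GadSt.p1, 0, GadSt.sink),
   (GadSt.sink, 0, GadSt.sink)}

/-- The sum of the weights of a list of edges. -/
def ELl {α : Type*} (ρ : List (WEdge α)) : ℤ := (ρ.map fun e => e.2.1).sum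


/-- Lower bound on the total weight of an `s'`-avoiding path from a given state. -/
private def gbound : GadSt → ℤ
  | GadSt.se => -12
  | GadSt.p8 => -15
  | GadSt.p4 => -7
  | GadSt.p2 => -3
  | GadSt.p1 => -1
  | GadSt.sink => 0
  | GadSt.s' => 0

private lemma lower (ρ : List (WEdge GadSt)) :
    ∀ s : GadSt, (∀ e ∈ ρ, e ∈ GadE) → List.Chain' (fun e f => e.2.2 = f.1) ρ →
    (∀ e, ρ.head? = some e → e.1 = s) → (∀ e ∈ ρ, e.2.2 ≠ GadSt.s') →
    gbound s ≤ ELl ρ := by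
  induction ρ with
  | nil =>
    intro s _ _ _ _
    cases s <;> simp [gbound, ELl]
  | cons e ρ' ih =>
    intro s hmem hch hhd havoid
    have he : e ∈ GadE := hmem e (List.mem_cons_self ..)
    have hs : e.1 = s := hhd e rfl
    have hhd' : ∀ f, ρ'.head? = some f → f.1 = e.2.2 := by
      intro f hf
      rcases ρ' with _ | ⟨f', ρ''⟩
      · simp at hf
      · simp at hf
        subst hf
        exact (List.isChain_cons_cons.mp hch).1.symm
    have hch' : List.Chain' (fun e f => e.2.2 = f.1) ρ' := hch.tail
    have ih' := ih e.2.2 (fun f hf => hmem f (List.mem_cons_of_mem _ hf)) hch' hhd'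
      (fun f hf => havoid f (List.mem_cons_of_mem _ hf))
    have havoid' : e.2.2 ≠ GadSt.s' := havoid e (List.mem_cons_self ..)
    have hElc : ELl (e :: ρ') = e.2.1 + ELl ρ' := by simp [ELl]
    rw [hElc]
    simp only [GadE, Set.mem_insert_iff, Set.mem_singleton_iff] at he
    rcases he with h|h|h|h|h|h|h|h|h|h|h <;> subst h <;>
      first
      | exact absurd rfl havoid'
      | (rw [← hs]; simp only [gbound] at ih' ⊢; omega)

/-- In the gadget, for every initial energy level `c ∈ ℕ` at `s_e`:
`P₀` (who owns all gadget states) can move from `s_e` while avoiding `s'` and reach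
`s_sink` with energy level exactly zero, keeping the energy level nonnegative at every
intermediate step, if and only if `c ≤ 12`. (In particular, if `c ≥ 13`, `P₀` cannot
achieve this inside the gadget and must take the edge to `s'`.) -/
theorem statement12 (c : ℕ) :
    (∃ ρ : List (WEdge GadSt),
      IsPrefixFrom GadE GadSt.se ρ ∧
      (∀ e ∈ ρ, e.2.2 ≠ GadSt.s') ∧
      EndSt GadSt.se ρ = GadSt.sink ∧
      (∀ k ≤ ρ.length, 0 ≤ (c : ℤ) + ELl (ρ.take k)) ∧
      (c : ℤ) + ELl ρ = 0) ↔ c ≤ 12 := by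
  constructor
  · rintro ⟨ρ, ⟨hmem, hch, hhd⟩, havoid, hend, _, hsum⟩
    have := lower ρ GadSt.se hmem hch hhd havoid
    simp [gbound] at this
    omega
  · intro hc
    obtain ⟨a, b, d, ee, hab, hbb, hdb, heb, hsum⟩ :
        ∃ a b d ee : ℤ, (a = -8 ∨ a = 0) ∧ (b = -4 ∨ b = 0) ∧ (d = -2 ∨ d = 0) ∧
          (ee = -1 ∨ ee = 0) ∧ 3 + a + b + d + ee = -(c : ℤ) := by
      refine ⟨-(8 * (((c : ℤ) + 3) / 8)), -(4 * (((c : ℤ) + 3) % 8 / 4)),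
        -(2 * (((c : ℤ) + 3) % 4 / 2)), -(((c : ℤ) + 3) % 2), ?_, ?_, ?_, ?_, ?_⟩ <;> omega
    refine ⟨[(GadSt.se, 3, GadSt.p8), (GadSt.p8, a, GadSt.p4), (GadSt.p4, b, GadSt.p2),
      (GadSt.p2, d, GadSt.p1), (GadSt.p1, ee, GadSt.sink)], ⟨?_, ?_, ?_⟩, ?_, ?_, ?_, ?_⟩
    · intro e hee
      simp only [List.mem_cons, List.not_mem_nil, or_false] at hee
      rcases hee with h|h|h|h|h <;> subst h <;>
        [skip; rcases hab with rfl|rfl; rcases hbb with rfl|rfl;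
         rcases hdb with rfl|rfl; rcases heb with rfl|rfl] <;>
        simp [GadE, Set.mem_insert_iff, Set.mem_singleton_iff]
    · simp [List.Chain']
    · intro e hee; simp at hee; subst hee; rfl
    · intro e hee
      simp only [List.mem_cons, List.not_mem_nil, or_false] at hee
      rcases hee with h|h|h|h|h <;> subst h <;> simp
    · rfl
    · intro k hk
      simp only [List.length_cons, List.length_nil] at hk
      interval_cases k <;> simp [ELl] <;> omega
    · simp [ELl]; omega


end AvgEnergy
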